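/- Let A₁ be an n×n signed bipartite adjacency matrix with parts of sizes s and n−s, and let A₂ be an m×m signed adjacency matrix. Let λ, μ ≥ 0 be real numbers such that A₁² − λ²·I_n and A₂² − μ²·I_m are positive semidefinite (i.e. λ² and μ² are lower bounds for the eigenvalues of A₁² and A₂², as when λ² and μ² are the minimum eigenvalues of A₁² and A₂²). Assume that n = 2s, or that the characteristic polynomial of A₂ equals the characteristic polynomial of −A₂. Let 𝒜 = A₁⊗I_m + D⊗A₂ be the signed Cartesian product matrix. Then for every subset S of the mn row indices of 𝒜 with |S| = ⌊mn/2⌋ + 1, there exists u ∈ S such that #{v ∈ S : 𝒜_{uv} ≠ 0} ≥ √(λ² + μ²). -/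

import Mathlib

open Matrix Kronecker

section SCPGHelpers

set_option linter.unusedSectionVars false
set_option maxHeartbeats 1000000
variable {ι : Type*} [Fintype ι] [DecidableEq ι]

lemma scpG_inner_real_eq_dot (x y : EuclideanSpace ℝ ι) : (inner ℝ x y : ℝ) = (x : ι → ℝ) ⬝ᵥ (y : ι → ℝ) := by
  simp [PiLp.inner_apply, dotProduct, mul_comm]

lemma scpG_repr_mulVec (A : Matrix ι ι ℝ) (hsymm : Aᵀ = A)
    (b : OrthonormalBasis ι ℝ (EuclideanSpace ℝ ι)) (lams : ι → ℝ)
    (heig : ∀ i, A *ᵥ (b i : ι → ℝ) = lams i • (b i : ι → ℝ))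
    (z : EuclideanSpace ℝ ι) (i : ι) :
    b.repr (WithLp.toLp 2 (A *ᵥ z : ι → ℝ)) i = lams i * b.repr z i := by
  rw [OrthonormalBasis.repr_apply_apply, OrthonormalBasis.repr_apply_apply,
    scpG_inner_real_eq_dot, scpG_inner_real_eq_dot]
  have h1 : (b i : ι → ℝ) ᵥ* A = A *ᵥ (b i : ι → ℝ) := by
    calc (b i : ι → ℝ) ᵥ* A = Aᵀ *ᵥ (b i : ι → ℝ) := (mulVec_transpose A _).symm
      _ = A *ᵥ (b i : ι → ℝ) := by rw [hsymm]
  calc (b i : ι → ℝ) ⬝ᵥ (A *ᵥ z)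
      = (A *ᵥ (b i : ι → ℝ)) ⬝ᵥ z := by rw [dotProduct_mulVec, h1]
    _ = lams i * ((b i : ι → ℝ) ⬝ᵥ z) := by rw [heig i, smul_dotProduct]; rfl

lemma scpG_dot_eq_sum_repr (A : Matrix ι ι ℝ) (hsymm : Aᵀ = A)
    (b : OrthonormalBasis ι ℝ (EuclideanSpace ℝ ι)) (lams : ι → ℝ)
    (heig : ∀ i, A *ᵥ (b i : ι → ℝ) = lams i • (b i : ι → ℝ))
    (z : EuclideanSpace ℝ ι) :
    (z : ι → ℝ) ⬝ᵥ (A *ᵥ z) = ∑ i, lams i * (b.repr z i)^2 := by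
  have h := b.repr.inner_map_map z (WithLp.toLp 2 (A *ᵥ z : ι → ℝ))
  rw [scpG_inner_real_eq_dot, scpG_inner_real_eq_dot, WithLp.ofLp_toLp] at h
  rw [← h, dotProduct]
  exact Finset.sum_congr rfl fun i _ => by
    rw [scpG_repr_mulVec A hsymm b lams heig z i]; ring

lemma scpG_dot_self_eq_sum_repr (b : OrthonormalBasis ι ℝ (EuclideanSpace ℝ ι))
    (z : EuclideanSpace ℝ ι) :
    (z : ι → ℝ) ⬝ᵥ (z : ι → ℝ) = ∑ i, (b.repr z i)^2 := by
  have h := b.repr.inner_map_map z z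
  rw [scpG_inner_real_eq_dot, scpG_inner_real_eq_dot] at h
  rw [← h, dotProduct]
  exact Finset.sum_congr rfl fun i _ => by ring

lemma scpG_core (M : Matrix ι ι ℝ) (hsym : M.IsHermitian)
    (hent : ∀ i j, |M i j| ≤ 1) (θ : ℝ)
    (x : ι → ℝ) (hx : x ≠ 0) (S : Finset ι)
    (hsupp : ∀ v, v ∉ S → x v = 0)
    (hray : θ * (x ⬝ᵥ x) ≤ x ⬝ᵥ (M *ᵥ x)) :
    ∃ u ∈ S, θ ≤ ((S.filter (fun v => M u v ≠ 0)).card : ℝ) := by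
  classical
  set κ := {v // v ∈ S} with hκdef
  set B : Matrix κ κ ℝ := M.submatrix Subtype.val Subtype.val with hBdef
  have hB : B.IsHermitian := hsym.submatrix _
  have hBsymm : Bᵀ = B := by
    have h := hB; rwa [IsHermitian, conjTranspose_eq_transpose_of_trivial] at h
  set x' : EuclideanSpace ℝ κ := WithLp.toLp 2 (fun v : κ => x v.val) with hx'def
  have hinner : ∀ u : ι, ∑ v : κ, M u v.val * x v.val = ∑ v, M u v * x v := by
    intro u
    rw [Finset.sum_coe_sort S (fun v => M u v * x v)]
    exact Finset.sum_subset (Finset.subset_univ S)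
      (fun v _ hv => by rw [hsupp v hv, mul_zero])
  have hdotMx : (x' : κ → ℝ) ⬝ᵥ (B *ᵥ x') = x ⬝ᵥ (M *ᵥ x) := by
    simp only [hx'def, WithLp.ofLp_toLp, hBdef, dotProduct, mulVec, dotProduct, submatrix_apply]
    calc ∑ u : κ, x u.val * ∑ v : κ, M u.val v.val * x v.val
        = ∑ u : κ, x u.val * ∑ v, M u.val v * x v := by
          exact Finset.sum_congr rfl fun u _ => by rw [hinner]
      _ = ∑ u ∈ S, x u * ∑ v, M u v * x v :=
          Finset.sum_coe_sort S (fun u => x u * ∑ v, M u v * x v)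
      _ = ∑ u, x u * ∑ v, M u v * x v :=
          Finset.sum_subset (Finset.subset_univ S)
            (fun u _ hu => by rw [hsupp u hu, zero_mul])
  have hdotxx : (x' : κ → ℝ) ⬝ᵥ (x' : κ → ℝ) = x ⬝ᵥ x := by
    simp only [hx'def, WithLp.ofLp_toLp, dotProduct]
    calc ∑ u : κ, x u.val * x u.val
        = ∑ u ∈ S, x u * x u := Finset.sum_coe_sort S (fun u => x u * x u)
      _ = ∑ u, x u * x u :=
          Finset.sum_subset (Finset.subset_univ S)
            (fun u _ hu => by rw [hsupp u hu, zero_mul])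
  obtain ⟨w, hw⟩ : ∃ w, x w ≠ 0 := by
    by_contra h
    push_neg at h
    exact hx (funext h)
  have hwS : w ∈ S := by by_contra h; exact hw (hsupp w h)
  have hxx_pos : 0 < x ⬝ᵥ x := by
    refine Finset.sum_pos' (fun v _ => mul_self_nonneg (x v)) ⟨w, Finset.mem_univ w, ?_⟩
    exact mul_self_pos.mpr hw
  have hsum1 := scpG_dot_eq_sum_repr B hBsymm hB.eigenvectorBasis hB.eigenvalues
    hB.mulVec_eigenvectorBasis x'
  have hsum2 := scpG_dot_self_eq_sum_repr hB.eigenvectorBasis x'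
  set c : κ → ℝ := fun i => hB.eigenvectorBasis.repr x' i with hcdef
  have hcpos : 0 < ∑ i, (c i)^2 := by rw [← hsum2, hdotxx]; exact hxx_pos
  have hray' : θ * ∑ i, (c i)^2 ≤ ∑ i, hB.eigenvalues i * (c i)^2 := by
    rw [← hsum1, ← hsum2, hdotxx, hdotMx]; exact hray
  have hex : ∃ i : κ, θ ≤ hB.eigenvalues i := by
    by_contra h
    push_neg at h
    obtain ⟨i0, -, hi0⟩ : ∃ i ∈ Finset.univ, (0:ℝ) < (c i)^2 := by
      by_contra h'
      push_neg at h'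
      have : ∑ i, (c i)^2 ≤ 0 := Finset.sum_nonpos fun i hi => h' i hi
      linarith
    have hlt : ∑ i, hB.eigenvalues i * (c i)^2 < ∑ i, θ * (c i)^2 := by
      refine Finset.sum_lt_sum (fun i _ => ?_) ⟨i0, Finset.mem_univ i0, ?_⟩
      · exact mul_le_mul_of_nonneg_right (le_of_lt (h i)) (sq_nonneg (c i))
      · exact mul_lt_mul_of_pos_right (h i0) hi0
    rw [← Finset.mul_sum] at hlt
    linarith
  obtain ⟨i, hi⟩ := hex
  set y : EuclideanSpace ℝ κ := hB.eigenvectorBasis i with hydef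
  have hy0 : y ≠ 0 := hB.eigenvectorBasis.orthonormal.ne_zero i
  have hBy : B *ᵥ (y : κ → ℝ) = hB.eigenvalues i • (y : κ → ℝ) := hB.mulVec_eigenvectorBasis i
  have hκne : Nonempty κ := ⟨⟨w, hwS⟩⟩
  obtain ⟨u', -, hu'⟩ := Finset.exists_max_image (Finset.univ : Finset κ)
    (fun v => |y v|) ⟨Classical.arbitrary κ, Finset.mem_univ _⟩
  have hyu'pos : 0 < |y u'| := by
    rcases eq_or_lt_of_le (abs_nonneg (y u')) with h | h
    · exfalso
      apply hy0
      ext v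
      have := hu' v (Finset.mem_univ v)
      rw [← h] at this
      exact abs_nonpos_iff.mp this
    · exact h
  set F : Finset κ := Finset.univ.filter (fun v : κ => B u' v ≠ 0) with hFdef
  have hkey : hB.eigenvalues i * |y u'| ≤ (F.card : ℝ) * |y u'| := by
    calc hB.eigenvalues i * |y u'|
        ≤ |hB.eigenvalues i| * |y u'| :=
          mul_le_mul_of_nonneg_right (le_abs_self _) (abs_nonneg _)
      _ = |hB.eigenvalues i * y u'| := (abs_mul _ _).symm
      _ = |(B *ᵥ (y : κ → ℝ)) u'| := by rw [hBy]; rfl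
      _ = |∑ v, B u' v * y v| := rfl
      _ ≤ ∑ v, |B u' v * y v| := Finset.abs_sum_le_sum_abs _ _
      _ = ∑ v ∈ F, |B u' v * y v| := by
          refine (Finset.sum_filter_of_ne ?_).symm
          intro v _ hne hBv
          exact hne (by rw [hBv, zero_mul, abs_zero])
      _ ≤ ∑ v ∈ F, |y u'| := by
          refine Finset.sum_le_sum fun v hv => ?_
          rw [abs_mul]
          calc |B u' v| * |y v| ≤ 1 * |y u'| :=
                mul_le_mul (hent _ _) (hu' v (Finset.mem_univ v)) (abs_nonneg _) zero_le_one
            _ = |y u'| := one_mul _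
      _ = (F.card : ℝ) * |y u'| := by rw [Finset.sum_const, nsmul_eq_mul]
  have hlam_le : hB.eigenvalues i ≤ (F.card : ℝ) :=
    le_of_mul_le_mul_right (by simpa using hkey) hyu'pos
  refine ⟨u'.val, u'.2, ?_⟩
  have hcard : F.card = (S.filter (fun v => M u'.val v ≠ 0)).card := by
    refine Finset.card_bij (fun v _ => v.val) ?_ ?_ ?_
    · intro v hv
      rw [Finset.mem_filter] at hv ⊢
      exact ⟨v.2, hv.2⟩
    · intro a ha b hb h
      exact Subtype.ext h
    · intro b hb
      rw [Finset.mem_filter] at hb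
      exact ⟨⟨b, hb.1⟩, Finset.mem_filter.mpr ⟨Finset.mem_univ _, hb.2⟩, rfl⟩
  rw [← hcard]
  exact le_trans hi hlam_le

lemma scpG_half (M : Matrix ι ι ℝ) (hsym : M.IsHermitian)
    (hent : ∀ i j, |M i j| ≤ 1) (θ : ℝ)
    (b : OrthonormalBasis ι ℝ (EuclideanSpace ℝ ι)) (lams : ι → ℝ)
    (heig : ∀ i, M *ᵥ (b i : ι → ℝ) = lams i • (b i : ι → ℝ))
    (T : Finset ι) (hT : ∀ i ∈ T, θ ≤ lams i)
    (S : Finset ι) (hcard : Fintype.card ι < T.card + S.card) :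
    ∃ u ∈ S, θ ≤ ((S.filter (fun v => M u v ≠ 0)).card : ℝ) := by
  classical
  have hMsymm : Mᵀ = M := by
    have h := hsym; rwa [IsHermitian, conjTranspose_eq_transpose_of_trivial] at h
  set W : Submodule ℝ (EuclideanSpace ℝ ι) :=
    Submodule.span ℝ (Set.range (⇑b ∘ (Subtype.val : {i // i ∈ T} → ι))) with hWdef
  set U : Submodule ℝ (EuclideanSpace ℝ ι) :=
    Submodule.span ℝ (Set.range (⇑(EuclideanSpace.basisFun ι ℝ) ∘ (Subtype.val : {v // v ∈ S} → ι))) with hUdef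
  have hWrank : Module.finrank ℝ W = T.card := by
    rw [hWdef, finrank_span_eq_card
      (b.orthonormal.linearIndependent.comp Subtype.val Subtype.val_injective)]
    exact Fintype.card_coe T
  have hUrank : Module.finrank ℝ U = S.card := by
    rw [hUdef, finrank_span_eq_card
      (((EuclideanSpace.basisFun ι ℝ).orthonormal.linearIndependent).comp
        Subtype.val Subtype.val_injective)]
    exact Fintype.card_coe S
  have hinf_pos : 0 < Module.finrank ℝ ↥(W ⊓ U) := by
    have hsup : Module.finrank ℝ ↥(W ⊔ U) ≤ Fintype.card ι := by
      have := Submodule.finrank_le (W ⊔ U)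
      rwa [finrank_euclideanSpace] at this
    have heq := Submodule.finrank_sup_add_finrank_inf_eq W U
    omega
  obtain ⟨x₀, hx₀⟩ := Module.finrank_pos_iff_exists_ne_zero.mp hinf_pos
  obtain ⟨x, hxWU, hxne⟩ : ∃ x : EuclideanSpace ℝ ι, x ∈ W ⊓ U ∧ x ≠ 0 :=
    ⟨x₀.val, x₀.2, fun h => hx₀ (Subtype.ext h)⟩
  have hxW : x ∈ W := hxWU.1
  have hxU : x ∈ U := hxWU.2
  -- support of x
  have hsupp : ∀ v, v ∉ S → x v = 0 := by
    have : ∀ z ∈ U, ∀ v, v ∉ S → (z : ι → ℝ) v = 0 := by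
      intro z hz
      refine Submodule.span_induction ?_ ?_ ?_ ?_ hz
      · rintro _ ⟨w, rfl⟩ v hv
        have hne : v ≠ w.val := fun h => hv (h ▸ w.2)
        simp [Function.comp_apply, EuclideanSpace.basisFun_apply,
          EuclideanSpace.single_apply, hne]
      · intro v _; rfl
      · intro z₁ z₂ _ _ h1 h2 v hv
        have := congrArg₂ (· + ·) (h1 v hv) (h2 v hv)
        simpa using this
      · intro a z _ h v hv
        have : (a • z : EuclideanSpace ℝ ι) v = a * z v := rfl
        rw [this, h v hv, mul_zero]
    exact this x hxU
  -- repr support of x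
  have hrepr : ∀ i, i ∉ T → b.repr x i = 0 := by
    have : ∀ z ∈ W, ∀ i, i ∉ T → b.repr z i = 0 := by
      intro z hz
      refine Submodule.span_induction ?_ ?_ ?_ ?_ hz
      · rintro _ ⟨j, rfl⟩ i hi
        have hne : i ≠ j.val := fun h => hi (h ▸ j.2)
        simp [Function.comp_apply, b.repr_self, EuclideanSpace.single_apply, hne]
      · intro i _; simp
      · intro z₁ z₂ _ _ h1 h2 i hi
        rw [map_add]
        have : (b.repr z₁ + b.repr z₂ : EuclideanSpace ℝ ι) i = b.repr z₁ i + b.repr z₂ i := rfl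
        rw [this, h1 i hi, h2 i hi, add_zero]
      · intro a z _ h i hi
        rw [_root_.map_smul]
        have : (a • b.repr z : EuclideanSpace ℝ ι) i = a * b.repr z i := rfl
        rw [this, h i hi, mul_zero]
    exact this x hxW
  -- Rayleigh inequality
  have hray : θ * ((x : ι → ℝ) ⬝ᵥ (x : ι → ℝ)) ≤ (x : ι → ℝ) ⬝ᵥ (M *ᵥ (x : ι → ℝ)) := by
    rw [scpG_dot_eq_sum_repr M hMsymm b lams heig x, scpG_dot_self_eq_sum_repr b x, Finset.mul_sum]
    refine Finset.sum_le_sum fun i _ => ?_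
    by_cases hiT : i ∈ T
    · exact mul_le_mul_of_nonneg_right (hT i hiT) (sq_nonneg _)
    · rw [hrepr i hiT]
      simp
  exact scpG_core M hsym hent θ x (by simpa using hxne) S hsupp hray

lemma scpG_middle (M : Matrix ι ι ℝ) (hsym : M.IsHermitian)
    (hent : ∀ i j, |M i j| ≤ 1) (θ : ℝ) (hθ : 0 ≤ θ)
    (hpsd : (M * M - (θ ^ 2) • (1 : Matrix ι ι ℝ)).PosSemidef)
    (S : Finset ι) (hScard : Fintype.card ι < 2 * S.card) :
    ∃ u ∈ S, θ ≤ ((S.filter (fun v => M u v ≠ 0)).card : ℝ) := by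
  classical
  have hSne : S.Nonempty := by
    rw [← Finset.card_pos]
    have := Finset.card_le_univ S
    omega
  rcases eq_or_lt_of_le hθ with hθ0 | hθpos
  · obtain ⟨u, hu⟩ := hSne
    exact ⟨u, hu, by rw [← hθ0]; positivity⟩
  set b := hsym.eigenvectorBasis with hbdef
  set lam := hsym.eigenvalues with hlamdef
  have heig : ∀ i, M *ᵥ (b i : ι → ℝ) = lam i • (b i : ι → ℝ) :=
    hsym.mulVec_eigenvectorBasis
  have habs : ∀ i, θ ≤ |lam i| := by
    intro i
    have h := hpsd.dotProduct_mulVec_nonneg (b i : ι → ℝ)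
    have hv : (M * M - (θ ^ 2) • (1 : Matrix ι ι ℝ)) *ᵥ (b i : ι → ℝ)
        = (lam i ^ 2 - θ ^ 2) • (b i : ι → ℝ) := by
      rw [sub_mulVec, ← mulVec_mulVec, heig i, mulVec_smul, heig i,
        smul_mulVec, one_mulVec, smul_smul, sub_smul, pow_two]
      rw [pow_two]
    rw [hv] at h
    have hdot1 : (b i : ι → ℝ) ⬝ᵥ (b i : ι → ℝ) = 1 := by
      have h1 := scpG_inner_real_eq_dot (b i) (b i)
      rw [real_inner_self_eq_norm_sq, b.orthonormal.1 i] at h1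
      rw [← h1]; norm_num
    simp only [star_trivial] at h
    rw [dotProduct_smul, smul_eq_mul, hdot1, mul_one] at h
    nlinarith [abs_nonneg (lam i), sq_abs (lam i)]
  have hne : ∀ i, lam i ≠ 0 := fun i h => by
    have := habs i; rw [h, abs_zero] at this; linarith
  set pos := Finset.univ.filter (fun i => 0 < lam i) with hposdef
  set neg := Finset.univ.filter (fun i => lam i < 0) with hnegdef
  have hsplit : pos.card + neg.card = Fintype.card ι := by
    have h := Finset.card_filter_add_card_filter_not
      (s := Finset.univ) (p := fun i => 0 < lam i)
    rw [Finset.card_univ] at h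
    rw [← h]
    congr 2
    apply Finset.filter_congr
    intro i _
    simp only [not_lt]
    constructor
    · exact fun h' => le_of_lt h'
    · exact fun h' => lt_of_le_of_ne h' (hne i)
  by_cases hc : Fintype.card ι < pos.card + S.card
  · refine scpG_half M hsym hent θ b lam heig pos ?_ S hc
    intro i hi
    rw [hposdef, Finset.mem_filter] at hi
    have := habs i
    rwa [abs_of_pos hi.2] at this
  · have hc2 : Fintype.card ι < neg.card + S.card := by omega
    have hres := scpG_half (-M) (by simpa using hsym.neg) (fun i j => by
        rw [Matrix.neg_apply, abs_neg]; exact hent i j) θ b (fun i => - lam i)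
      (fun i => by rw [neg_mulVec, heig i, neg_smul]) neg (fun i hi => by
        rw [hnegdef, Finset.mem_filter] at hi
        have := habs i
        rwa [abs_of_neg hi.2] at this) S hc2
    obtain ⟨u, huS, hu⟩ := hres
    refine ⟨u, huS, ?_⟩
    have : (S.filter (fun v => (-M) u v ≠ 0)) = S.filter (fun v => M u v ≠ 0) := by
      apply Finset.filter_congr
      intro v _
      simp
    rwa [this] at hu


end SCPGHelpers

/-- Let `A₁` be an `n × n` signed bipartite adjacency matrix (parts of sizes `s` and `t = n - s`)
and `A₂` an `m × m` signed adjacency matrix, with `λ² ≤` eigenvalues of `A₁²` and `μ² ≤`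
eigenvalues of `A₂²` (stated as positive semidefiniteness).  If the bipartition is balanced
(`n = 2s`) or the spectrum of `A₂` is symmetric, then every `(⌊mn/2⌋ + 1)`-vertex induced
subgraph of the signed Cartesian product `𝒜 = A₁ ⊗ I_m + D ⊗ A₂` has maximum degree at least
`√(λ² + μ²)`. -/
theorem signed_cartesian_product_induced_subgraph_max_degree_general
    (s t m : ℕ) (lam mu : ℝ) (hlam : 0 ≤ lam) (hmu : 0 ≤ mu)
    (P : Matrix (Fin s) (Fin t) ℝ)
    (hP : ∀ i j, P i j = -1 ∨ P i j = 0 ∨ P i j = 1)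
    (A₂ : Matrix (Fin m) (Fin m) ℝ)
    (hA₂symm : A₂.IsSymm) (hA₂diag : ∀ i, A₂ i i = 0)
    (hA₂ent : ∀ i j, A₂ i j = -1 ∨ A₂ i j = 0 ∨ A₂ i j = 1)
    (A₁ : Matrix (Fin s ⊕ Fin t) (Fin s ⊕ Fin t) ℝ)
    (hA₁ : A₁ = Matrix.fromBlocks 0 P Pᵀ 0)
    (hpsd₁ : (A₁ * A₁ - (lam ^ 2) • (1 : Matrix (Fin s ⊕ Fin t) (Fin s ⊕ Fin t) ℝ)).PosSemidef)
    (hpsd₂ : (A₂ * A₂ - (mu ^ 2) • (1 : Matrix (Fin m) (Fin m) ℝ)).PosSemidef)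
    (hbal : s + t = 2 * s ∨ A₂.charpoly = (-A₂).charpoly)
    (D : Matrix (Fin s ⊕ Fin t) (Fin s ⊕ Fin t) ℝ)
    (hD : D = Matrix.fromBlocks 1 0 0 (-1))
    (𝒜 : Matrix ((Fin s ⊕ Fin t) × Fin m) ((Fin s ⊕ Fin t) × Fin m) ℝ)
    (h𝒜 : 𝒜 = A₁ ⊗ₖ (1 : Matrix (Fin m) (Fin m) ℝ) + D ⊗ₖ A₂)
    (S : Finset ((Fin s ⊕ Fin t) × Fin m))
    (hS : S.card = m * (s + t) / 2 + 1) :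
    ∃ u ∈ S, Real.sqrt (lam ^ 2 + mu ^ 2) ≤
      ((S.filter (fun v => 𝒜 u v ≠ 0)).card : ℝ) := by
  classical
  set θ := Real.sqrt (lam ^ 2 + mu ^ 2) with hθdef
  have hθ : 0 ≤ θ := Real.sqrt_nonneg _
  have hθsq : θ ^ 2 = lam ^ 2 + mu ^ 2 := Real.sq_sqrt (by positivity)
  -- symmetry
  have hA₁symm : A₁ᵀ = A₁ := by
    simp [hA₁, fromBlocks_transpose]
  have hDsymm : Dᵀ = D := by
    simp [hD, fromBlocks_transpose]
  have h𝒜symm : 𝒜ᵀ = 𝒜 := by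
    rw [h𝒜, transpose_add, ← kroneckerMap_transpose, ← kroneckerMap_transpose,
      hA₁symm, hDsymm, transpose_one]
    have hA2 : A₂ᵀ = A₂ := hA₂symm
    rw [hA2]
  have hherm : 𝒜.IsHermitian := by
    rw [IsHermitian, conjTranspose_eq_transpose_of_trivial]
    exact h𝒜symm
  -- entry bounds
  have hPabs : ∀ i j, |P i j| ≤ 1 := by
    intro i j; rcases hP i j with h | h | h <;> rw [h] <;> norm_num
  have hA₂abs : ∀ i j, |A₂ i j| ≤ 1 := by
    intro i j; rcases hA₂ent i j with h | h | h <;> rw [h] <;> norm_num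
  have hA₁abs : ∀ i j, |A₁ i j| ≤ 1 := by
    intro i j; rw [hA₁]
    rcases i with a | a <;> rcases j with b | b
    · simp
    · simpa using hPabs a b
    · simpa using hPabs b a
    · simp
  have hA₁diag : ∀ i, A₁ i i = 0 := by
    intro i; rw [hA₁]; rcases i with a | a <;> simp
  have hDdiag : ∀ i, |D i i| ≤ 1 := by
    intro i; rw [hD]; rcases i with a | a <;> simp [one_apply]
  have hDoff : ∀ i j, i ≠ j → D i j = 0 := by
    intro i j hij; rw [hD]
    rcases i with a | a <;> rcases j with b | b
    · have : a ≠ b := fun h => hij (by rw [h])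
      simp [one_apply, this]
    · simp
    · simp
    · have : a ≠ b := fun h => hij (by rw [h])
      simp [one_apply, this]
  have hent𝒜 : ∀ e f, |𝒜 e f| ≤ 1 := by
    rintro ⟨i, k⟩ ⟨j, l⟩
    rw [h𝒜]
    simp only [Matrix.add_apply, kroneckerMap_apply]
    by_cases hij : i = j
    · subst hij
      rw [hA₁diag i, zero_mul, zero_add, abs_mul]
      calc |D i i| * |A₂ k l| ≤ 1 * 1 :=
            mul_le_mul (hDdiag i) (hA₂abs k l) (abs_nonneg _) zero_le_one
        _ = 1 := one_mul 1
    · rw [hDoff i j hij, zero_mul, add_zero, one_apply]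
      by_cases hkl : k = l
      · rw [if_pos hkl, mul_one]; exact hA₁abs i j
      · rw [if_neg hkl, mul_zero, abs_zero]; norm_num
  -- anticommutation and algebra
  have hanti : A₁ * D + D * A₁ = 0 := by
    rw [hA₁, hD]
    simp [fromBlocks_multiply, fromBlocks_add]
  have hDD : D * D = 1 := by
    rw [hD]
    simp [fromBlocks_multiply]
  have h𝒜sq : 𝒜 * 𝒜 = (A₁ * A₁) ⊗ₖ (1 : Matrix (Fin m) (Fin m) ℝ)
      + (1 : Matrix (Fin s ⊕ Fin t) (Fin s ⊕ Fin t) ℝ) ⊗ₖ (A₂ * A₂) := by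
    rw [h𝒜, add_mul, mul_add, mul_add, ← mul_kronecker_mul, ← mul_kronecker_mul,
      ← mul_kronecker_mul, ← mul_kronecker_mul, hDD]
    simp only [one_mul, mul_one]
    have h0 : (A₁ * D) ⊗ₖ A₂ + (D * A₁) ⊗ₖ A₂ = 0 := by
      rw [← add_kronecker, hanti, zero_kronecker]
    calc (A₁ * A₁) ⊗ₖ (1 : Matrix (Fin m) (Fin m) ℝ) + (A₁ * D) ⊗ₖ A₂
          + ((D * A₁) ⊗ₖ A₂ + (1 : Matrix (Fin s ⊕ Fin t) (Fin s ⊕ Fin t) ℝ) ⊗ₖ (A₂ * A₂))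
        = (A₁ * A₁) ⊗ₖ (1 : Matrix (Fin m) (Fin m) ℝ)
          + ((A₁ * D) ⊗ₖ A₂ + (D * A₁) ⊗ₖ A₂)
          + (1 : Matrix (Fin s ⊕ Fin t) (Fin s ⊕ Fin t) ℝ) ⊗ₖ (A₂ * A₂) := by abel
      _ = (A₁ * A₁) ⊗ₖ (1 : Matrix (Fin m) (Fin m) ℝ)
          + (1 : Matrix (Fin s ⊕ Fin t) (Fin s ⊕ Fin t) ℝ) ⊗ₖ (A₂ * A₂) := by
          rw [h0, add_zero]
  have heq : 𝒜 * 𝒜 - (θ ^ 2) • (1 : Matrix ((Fin s ⊕ Fin t) × Fin m) ((Fin s ⊕ Fin t) × Fin m) ℝ)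
      = (A₁ * A₁ - (lam ^ 2) • 1) ⊗ₖ (1 : Matrix (Fin m) (Fin m) ℝ)
        + (1 : Matrix (Fin s ⊕ Fin t) (Fin s ⊕ Fin t) ℝ) ⊗ₖ (A₂ * A₂ - (mu ^ 2) • 1) := by
    have e1 : (A₁ * A₁ - (lam ^ 2) • 1) ⊗ₖ (1 : Matrix (Fin m) (Fin m) ℝ)
        = (A₁ * A₁) ⊗ₖ (1 : Matrix (Fin m) (Fin m) ℝ)
          - (lam ^ 2) • (1 : Matrix ((Fin s ⊕ Fin t) × Fin m) ((Fin s ⊕ Fin t) × Fin m) ℝ) := by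
      rw [sub_eq_add_neg, ← neg_smul, add_kronecker, smul_kronecker, one_kronecker_one,
        neg_smul, ← sub_eq_add_neg]
    have e2 : (1 : Matrix (Fin s ⊕ Fin t) (Fin s ⊕ Fin t) ℝ) ⊗ₖ (A₂ * A₂ - (mu ^ 2) • 1)
        = (1 : Matrix (Fin s ⊕ Fin t) (Fin s ⊕ Fin t) ℝ) ⊗ₖ (A₂ * A₂)
          - (mu ^ 2) • (1 : Matrix ((Fin s ⊕ Fin t) × Fin m) ((Fin s ⊕ Fin t) × Fin m) ℝ) := by
      rw [sub_eq_add_neg, ← neg_smul, kronecker_add, kronecker_smul, one_kronecker_one,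
        neg_smul, ← sub_eq_add_neg]
    rw [h𝒜sq, hθsq, e1, e2, add_smul]
    abel
  have hpsdX : ((A₁ * A₁ - (lam ^ 2) • 1) ⊗ₖ (1 : Matrix (Fin m) (Fin m) ℝ)).PosSemidef := by
    obtain ⟨B, hB⟩ : ∃ B : Matrix (Fin s ⊕ Fin t) (Fin s ⊕ Fin t) ℝ, A₁ * A₁ - (lam ^ 2) • 1 = Bᴴ * B := by
      open MatrixOrder Matrix.Norms.L2Operator in
      exact CStarAlgebra.nonneg_iff_eq_star_mul_self.mp hpsd₁.nonneg
    rw [hB]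
    have : (Bᴴ * B) ⊗ₖ (1 : Matrix (Fin m) (Fin m) ℝ)
        = (B ⊗ₖ (1 : Matrix (Fin m) (Fin m) ℝ))ᴴ * (B ⊗ₖ (1 : Matrix (Fin m) (Fin m) ℝ)) := by
      rw [conjTranspose_eq_transpose_of_trivial, conjTranspose_eq_transpose_of_trivial,
        ← kroneckerMap_transpose, ← mul_kronecker_mul, transpose_one, one_mul]
    rw [this]
    exact posSemidef_conjTranspose_mul_self _
  have hpsdY : ((1 : Matrix (Fin s ⊕ Fin t) (Fin s ⊕ Fin t) ℝ) ⊗ₖ (A₂ * A₂ - (mu ^ 2) • 1)).PosSemidef := by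
    obtain ⟨B, hB⟩ : ∃ B : Matrix (Fin m) (Fin m) ℝ, A₂ * A₂ - (mu ^ 2) • 1 = Bᴴ * B := by
      open MatrixOrder Matrix.Norms.L2Operator in
      exact CStarAlgebra.nonneg_iff_eq_star_mul_self.mp hpsd₂.nonneg
    rw [hB]
    have : (1 : Matrix (Fin s ⊕ Fin t) (Fin s ⊕ Fin t) ℝ) ⊗ₖ (Bᴴ * B)
        = ((1 : Matrix (Fin s ⊕ Fin t) (Fin s ⊕ Fin t) ℝ) ⊗ₖ B)ᴴ
          * ((1 : Matrix (Fin s ⊕ Fin t) (Fin s ⊕ Fin t) ℝ) ⊗ₖ B) := by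
      rw [conjTranspose_eq_transpose_of_trivial, conjTranspose_eq_transpose_of_trivial,
        ← kroneckerMap_transpose, ← mul_kronecker_mul, transpose_one, one_mul]
    rw [this]
    exact posSemidef_conjTranspose_mul_self _
  have hpsd𝒜 : (𝒜 * 𝒜 - (θ ^ 2) • (1 : Matrix ((Fin s ⊕ Fin t) × Fin m) ((Fin s ⊕ Fin t) × Fin m) ℝ)).PosSemidef := by
    rw [heq]
    exact hpsdX.add hpsdY
  have hcard : Fintype.card ((Fin s ⊕ Fin t) × Fin m) < 2 * S.card := by
    have h1 : Fintype.card ((Fin s ⊕ Fin t) × Fin m) = m * (s + t) := by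
      simp [Fintype.card_prod, Fintype.card_sum, mul_comm]
    omega
  exact scpG_middle 𝒜 hherm hent𝒜 θ hθ hpsd𝒜 S hcard
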